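/- arXiv:2107.02166 — 2 statements merged into one kernel-verified Lean document; each statement's English description precedes it below -/
import Mathlib

section
/- Let X = [0,1] and α(x) = 2x for x ∈ [0,1/2], α(x) = 1 for x ∈ [1/2,1]. Then the only ergodic α-invariant Borel probability measures are the Dirac measures δ_0 and δ_1, hence the essential set is X_α = {0,1}, and α⁻¹(X_α) = {0} ∪ [1/2,1] ≠ X_α. -/
open MeasureTheory

noncomputable section

/-- The unit interval `[0,1]` as a subtype of `ℝ`. -/
abbrev unitI : Set ℝ := Set.Icc 0 1

/-- The map `α(x) = 2x` for `x ∈ [0,1/2]` and `α(x) = 1` for `x ∈ [1/2,1]`,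
written as `α(x) = min (2x) 1`. -/
def tentMap : unitI → unitI := fun x =>
  ⟨min (2 * x.1) 1, ⟨le_min (by nlinarith [x.2.1]) zero_le_one, min_le_right _ _⟩⟩

/-- The essential set: points all of whose open neighborhoods have positive
measure for some `α`-invariant Borel probability measure. -/
def essentialSet {X : Type*} [TopologicalSpace X] [MeasurableSpace X] (α : X → X) : Set X :=
  {x : X | ∀ V : Set X, IsOpen V → x ∈ V →
    ∃ μ : Measure X, IsProbabilityMeasure μ ∧ μ.map α = μ ∧ 0 < μ V}

/-- The point `0` of the unit interval. -/
def pt0 : unitI := ⟨0, by norm_num⟩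

/-- The point `1` of the unit interval. -/
def pt1 : unitI := ⟨1, by norm_num⟩

lemma tentMap_continuous : Continuous tentMap := by
  apply Continuous.subtype_mk
  exact (continuous_const.mul continuous_subtype_val).min continuous_const

lemma tentMap_measurable : Measurable tentMap := tentMap_continuous.measurable

/-- The nested sets `(0, 2⁻ⁿ)` in the unit interval. -/
def Cset (n : ℕ) : Set unitI := Subtype.val ⁻¹' Set.Ioo 0 ((1/2 : ℝ) ^ n)

lemma Cset_measurable (n : ℕ) : MeasurableSet (Cset n) :=
  measurableSet_Ioo.preimage measurable_subtype_coe

lemma tentMap_preimage_Cset (n : ℕ) : tentMap ⁻¹' Cset n = Cset (n + 1) := by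
  have hle : ((1:ℝ)/2) ^ n ≤ 1 := pow_le_one₀ (by norm_num) (by norm_num)
  ext ⟨a, ha0, ha1⟩
  simp only [Cset, tentMap, Set.mem_preimage, Set.mem_Ioo]
  constructor
  · rintro ⟨h1, h2⟩
    have h2a : 0 < 2 * a := lt_min_iff.mp h1 |>.1
    have hlt : 2 * a < 1 := by
      by_contra h
      rw [min_eq_right (not_lt.mp h)] at h2
      linarith
    rw [min_eq_left hlt.le] at h2
    rw [pow_succ]
    constructor <;> nlinarith
  · rintro ⟨h1, h2⟩
    rw [pow_succ] at h2
    have hlt : 2 * a < (1/2:ℝ) ^ n := by nlinarith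
    rw [min_eq_left (by linarith)]
    constructor <;> nlinarith

/-- Any invariant probability measure vanishes on `(0,1)`. -/
lemma invariant_measure_Ioo (μ : Measure unitI) (hp : IsProbabilityMeasure μ)
    (hμ : μ.map tentMap = μ) : μ (Cset 0) = 0 := by
  have key : ∀ n, μ (Cset 0) = μ (Cset n) := by
    intro n
    induction n with
    | zero => rfl
    | succ n ih =>
      rw [ih, ← tentMap_preimage_Cset,
        ← Measure.map_apply tentMap_measurable (Cset_measurable n), hμ]
  have hant : Antitone Cset := by
    intro m n h x hx
    refine ⟨hx.1, lt_of_lt_of_le hx.2 ?_⟩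
    exact pow_le_pow_of_le_one (by norm_num) (by norm_num) h
  have hint : ⋂ n, Cset n = ∅ := by
    ext x
    simp only [Set.mem_iInter, Set.mem_empty_iff_false, iff_false, not_forall]
    by_cases hx : 0 < x.1
    · obtain ⟨n, hn⟩ := exists_pow_lt_of_lt_one hx (by norm_num : (1:ℝ)/2 < 1)
      exact ⟨n, fun h => absurd h.2 (not_lt.mpr hn.le)⟩
    · exact ⟨0, fun h => hx h.1⟩
  have htend := tendsto_measure_iInter_atTop
    (fun n => (Cset_measurable n).nullMeasurableSet) hant ⟨0, measure_ne_top μ _⟩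
  rw [hint, measure_empty] at htend
  have hconst : (μ ∘ Cset) = fun _ => μ (Cset 0) := by
    funext n; exact (key n).symm
  rw [hconst] at htend
  exact tendsto_nhds_unique tendsto_const_nhds htend

lemma prob_eq_dirac {X : Type*} [MeasurableSpace X] [MeasurableSingletonClass X]
    (μ : Measure X) [IsProbabilityMeasure μ] (a : X) (h : μ {a} = 1) :
    μ = Measure.dirac a := by
  have hc : μ ({a}ᶜ) = 0 := (prob_compl_eq_zero_iff (measurableSet_singleton a)).mpr h
  ext s hs
  rw [Measure.dirac_apply' _ hs]
  by_cases ha : a ∈ s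
  · simp only [Set.indicator_of_mem ha, Pi.one_apply]
    refine le_antisymm prob_le_one ?_
    rw [← h]
    exact measure_mono (Set.singleton_subset_iff.mpr ha)
  · rw [Set.indicator_of_notMem ha]
    refine le_antisymm (le_trans (measure_mono ?_) hc.le) zero_le
    intro x hx
    simp only [Set.mem_compl_iff, Set.mem_singleton_iff]
    rintro rfl; exact ha hx

lemma tentMap_pt0 : tentMap pt0 = pt0 := by
  apply Subtype.ext
  simp [tentMap, pt0]

lemma tentMap_pt1 : tentMap pt1 = pt1 := by
  apply Subtype.ext
  simp [tentMap, pt1]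

lemma tentMap_preimage_pt0 : tentMap ⁻¹' {pt0} = {pt0} := by
  ext ⟨a, ha0, ha1⟩
  simp only [Set.mem_preimage, Set.mem_singleton_iff, tentMap, pt0, Subtype.ext_iff]
  constructor
  · intro h
    have h1 : min (2*a) 1 = 0 := h
    rcases min_eq_iff.mp h1 with ⟨h2, _⟩ | ⟨h2, _⟩
    · linarith
    · norm_num at h2
  · rintro h
    simp [h]

lemma mem_essentialSet_of_fixed (x : unitI) (hx : tentMap x = x) :
    x ∈ essentialSet tentMap := by
  intro V hV hxV
  refine ⟨Measure.dirac x, inferInstance, ?_, ?_⟩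
  · rw [Measure.map_dirac' tentMap_measurable, hx]
  · rw [Measure.dirac_apply' _ hV.measurableSet, Set.indicator_of_mem hxV]
    norm_num

lemma essentialSet_tentMap : essentialSet tentMap = {pt0, pt1} := by
  ext x
  constructor
  · intro hx
    by_contra hne
    simp only [Set.mem_insert_iff, Set.mem_singleton_iff, not_or] at hne
    have hx0 : x.1 ≠ 0 := fun h => hne.1 (Subtype.ext h)
    have hx1 : x.1 ≠ 1 := fun h => hne.2 (Subtype.ext h)
    have hmem : x ∈ Cset 0 := by
      refine ⟨lt_of_le_of_ne x.2.1 (Ne.symm hx0), ?_⟩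
      simpa using lt_of_le_of_ne x.2.2 hx1
    have hopen : IsOpen (Cset 0) := isOpen_Ioo.preimage continuous_subtype_val
    obtain ⟨μ, hp, hinv, hpos⟩ := hx (Cset 0) hopen hmem
    exact absurd (invariant_measure_Ioo μ hp hinv) (by simpa using hpos.ne')
  · rintro (rfl | rfl)
    · exact mem_essentialSet_of_fixed pt0 tentMap_pt0
    · exact mem_essentialSet_of_fixed pt1 tentMap_pt1

theorem tentMap_essentialSet :
    (∀ μ : Measure unitI, IsProbabilityMeasure μ → Ergodic tentMap μ →
      μ = Measure.dirac pt0 ∨ μ = Measure.dirac pt1) ∧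
    essentialSet tentMap = {pt0, pt1} ∧
    tentMap ⁻¹' (essentialSet tentMap) = {pt0} ∪ {x : unitI | 1 / 2 ≤ x.1} ∧
    tentMap ⁻¹' (essentialSet tentMap) ≠ essentialSet tentMap := by
  have hpre : tentMap ⁻¹' (essentialSet tentMap) = {pt0} ∪ {x : unitI | 1 / 2 ≤ x.1} := by
    rw [essentialSet_tentMap]
    ext ⟨a, ha0, ha1⟩
    simp only [Set.mem_preimage, Set.mem_insert_iff, Set.mem_singleton_iff, Set.mem_union,
      Set.mem_setOf_eq, tentMap, pt0, pt1, Subtype.ext_iff]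
    constructor
    · rintro (h | h)
      · left
        have h1 : min (2*a) 1 = 0 := h
        rcases min_eq_iff.mp h1 with ⟨h2, _⟩ | ⟨h2, _⟩
        · linarith
        · norm_num at h2
      · right
        have h1 : min (2*a) 1 = 1 := h
        rcases min_eq_iff.mp h1 with ⟨h2, h3⟩ | ⟨h2, h3⟩
        · linarith
        · linarith
    · rintro (h | h)
      · left; simp [h]
      · right
        rw [min_eq_right (by linarith)]
  refine ⟨?_, essentialSet_tentMap, hpre, ?_⟩
  · intro μ hp herg
    have hinv : μ.map tentMap = μ := herg.toMeasurePreserving.map_eq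
    have hB : μ (Cset 0) = 0 := invariant_measure_Ioo μ hp hinv
    rcases herg.measure_self_or_compl_eq_zero (measurableSet_singleton pt0)
        tentMap_preimage_pt0 with h0 | h0
    · -- μ {pt0} = 0, so μ {pt1} = 1
      right
      have hcsub : ({pt1}ᶜ : Set unitI) ⊆ {pt0} ∪ Cset 0 := by
        rintro ⟨a, ha0, ha1⟩ h
        simp only [Set.mem_compl_iff, Set.mem_singleton_iff, Subtype.ext_iff] at h
        rcases eq_or_lt_of_le ha0 with h2 | h2
        · left; exact Subtype.ext h2.symm
        · right; exact ⟨h2, by simpa using lt_of_le_of_ne ha1 h⟩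
      have hc : μ ({pt1}ᶜ) = 0 := by
        refine le_antisymm ?_ zero_le
        calc μ ({pt1}ᶜ) ≤ μ ({pt0} ∪ Cset 0) := measure_mono hcsub
        _ ≤ μ {pt0} + μ (Cset 0) := measure_union_le _ _
        _ = 0 := by rw [h0, hB, add_zero]
      exact prob_eq_dirac μ pt1
        ((prob_compl_eq_zero_iff (measurableSet_singleton pt1)).mp hc)
    · left
      exact prob_eq_dirac μ pt0
        ((prob_compl_eq_zero_iff (measurableSet_singleton pt0)).mp h0)
  · rw [hpre, essentialSet_tentMap]
    intro h
    have hw : (⟨1/2, by norm_num⟩ : unitI) ∈ ({pt0} ∪ {x : unitI | 1 / 2 ≤ x.1}) := by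
      right
      show (1:ℝ)/2 ≤ (1:ℝ)/2
      exact le_rfl
    rw [h] at hw
    rcases hw with h1 | h1 <;>
    · have h2 := congrArg Subtype.val h1
      simp only [pt0, pt1] at h2
      norm_num at h2
end
end

section
/- Let X be a compact metric space and α: X → X continuous with essential set X_α. Suppose there exists ε₀ > 0 such that whenever d(x, α(y)) < ε₀ with x, y ∈ X_α, there exists z ∈ α^{-1}(x) ∩ X_α with d(z,y) ≤ d(x, α(y)). Then for every finite ε₀-net F of X_α and every n ∈ ℕ, the set α^{-n}(F) ∩ X_α is (n, ε₀)-spanning for X_α. -/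
open MeasureTheory

lemma essentialSet_mapsTo {X : Type*} [TopologicalSpace X] [MeasurableSpace X] [BorelSpace X]
    (α : X → X) (hα : Continuous α) {y : X} (hy : y ∈ essentialSet α) :
    α y ∈ essentialSet α := by
  intro V hV hyV
  obtain ⟨μ, hprob, hinv, hpos⟩ := hy (α ⁻¹' V) (hV.preimage hα) hyV
  refine ⟨μ, hprob, hinv, ?_⟩
  have : μ V = μ (α ⁻¹' V) := by
    conv_lhs => rw [← hinv]
    exact Measure.map_apply hα.measurable hV.measurableSet
  rwa [this]

theorem preimage_of_net_spanning
    {X : Type*} [MetricSpace X] [CompactSpace X]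
    [MeasurableSpace X] [BorelSpace X]
    (α : X → X) (hα : Continuous α)
    (ε₀ : ℝ) (hε₀ : 0 < ε₀)
    (hlift : ∀ x ∈ essentialSet α, ∀ y ∈ essentialSet α, dist x (α y) < ε₀ →
      ∃ z : X, α z = x ∧ z ∈ essentialSet α ∧ dist z y ≤ dist x (α y))
    (F : Finset X) (hFsub : ↑F ⊆ essentialSet α)
    (hnet : ∀ y ∈ essentialSet α, ∃ x ∈ F, dist y x < ε₀)
    (n : ℕ) :
    ∀ y ∈ essentialSet α, ∃ z : X, z ∈ α^[n] ⁻¹' ↑F ∧ z ∈ essentialSet α ∧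
      ∀ i < n, dist (α^[i] z) (α^[i] y) < ε₀ := by
  suffices H : ∀ m : ℕ, ∀ y ∈ essentialSet α, ∃ z : X, z ∈ α^[m] ⁻¹' ↑F ∧
      z ∈ essentialSet α ∧ ∀ i ≤ m, dist (α^[i] z) (α^[i] y) < ε₀ by
    intro y hy
    obtain ⟨z, hzF, hzE, hd⟩ := H n y hy
    exact ⟨z, hzF, hzE, fun i hi => hd i hi.le⟩
  intro m
  induction m with
  | zero =>
    intro y hy
    obtain ⟨x, hxF, hxd⟩ := hnet y hy
    refine ⟨x, by simpa using hxF, hFsub hxF, ?_⟩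
    intro i hi
    interval_cases i
    simpa [dist_comm] using hxd
  | succ m ih =>
    intro y hy
    have hαy : α y ∈ essentialSet α := essentialSet_mapsTo α hα hy
    obtain ⟨z', hz'F, hz'E, hd'⟩ := ih (α y) hαy
    have h0 : dist z' (α y) < ε₀ := by simpa using hd' 0 (Nat.zero_le m)
    obtain ⟨z, hzα, hzE, hzd⟩ := hlift z' hz'E y hy h0
    refine ⟨z, ?_, hzE, ?_⟩
    · show α^[m + 1] z ∈ (F : Set X)
      rw [Function.iterate_succ_apply, hzα]
      exact hz'F
    · intro i hi
      cases i with
      | zero => simpa using lt_of_le_of_lt hzd h0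
      | succ j =>
        have hj : j ≤ m := Nat.succ_le_succ_iff.mp hi
        have h1 : α^[j + 1] z = α^[j] z' := by
          rw [Function.iterate_succ_apply, hzα]
        have h2 : α^[j + 1] y = α^[j] (α y) := Function.iterate_succ_apply α j y
        rw [h1, h2]
        exact hd' j hj
end
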